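/- Let K be a field with two commuting additive maps where an element c satisfies: the only algebraic relations among the words θ(c) (θ ranging over reduced words in σ_1, σ_2, σ_1⁻¹, σ_2⁻¹) are those induced by σ_1(σ_2^l(c)) = σ_2^l(c) for all l ∈ ℤ. Then the transcendence degree function f_c(r) = trdeg(Θ_r(c)) satisfies f_c(r) = 2r + 1 for all r ≥ 0. -/

import Mathlib

noncomputable def expSum : FreeGroup (Fin 2) →* Multiplicative ℤ :=
  FreeGroup.lift (fun i => Multiplicative.ofAdd (if i = 1 then 1 else 0))

lemma expSum_single_abs (a : Fin 2 × Bool) :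
    |(expSum (FreeGroup.mk [a])).toAdd| ≤ 1 := by
  obtain ⟨i, b⟩ := a
  cases b
  · have h : FreeGroup.mk [(i, false)] = (FreeGroup.of i)⁻¹ := by
      rw [show FreeGroup.of i = FreeGroup.mk [(i, true)] from rfl, FreeGroup.inv_mk]
      rfl
    rw [h, map_inv]
    show |(-(expSum (FreeGroup.of i)).toAdd)| ≤ 1
    rw [abs_neg]
    simp only [expSum, FreeGroup.lift_apply_of, toAdd_ofAdd]
    split <;> simp
  · show |(expSum (FreeGroup.of i)).toAdd| ≤ 1
    simp only [expSum, FreeGroup.lift_apply_of, toAdd_ofAdd]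
    split <;> simp

lemma expSum_mk_abs (L : List (Fin 2 × Bool)) :
    |(expSum (FreeGroup.mk L)).toAdd| ≤ L.length := by
  induction L with
  | nil =>
    rw [show FreeGroup.mk ([] : List (Fin 2 × Bool)) = 1 from rfl, map_one]
    simp
  | cons a L ih =>
    have h : FreeGroup.mk (a :: L) = FreeGroup.mk [a] * FreeGroup.mk L := by
      rw [FreeGroup.mul_mk]; rfl
    rw [h, map_mul]
    have : (expSum (FreeGroup.mk [a]) * expSum (FreeGroup.mk L)).toAdd
        = (expSum (FreeGroup.mk [a])).toAdd + (expSum (FreeGroup.mk L)).toAdd := rfl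
    rw [this]
    calc |(expSum (FreeGroup.mk [a])).toAdd + (expSum (FreeGroup.mk L)).toAdd|
        ≤ |(expSum (FreeGroup.mk [a])).toAdd| + |(expSum (FreeGroup.mk L)).toAdd| := abs_add_le _ _
      _ ≤ 1 + L.length := add_le_add (expSum_single_abs a) ih
      _ = ((a :: L).length : ℤ) := by simp [add_comm]

lemma expSum_abs_le (g : FreeGroup (Fin 2)) :
    |(expSum g).toAdd| ≤ (FreeGroup.toWord g).length := by
  conv_lhs => rw [← FreeGroup.mk_toWord (x := g)]
  exact expSum_mk_abs _

lemma myNorm_zpow (l : ℤ) : ((FreeGroup.of (1 : Fin 2)) ^ l).toWord.length = l.natAbs := by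
  rcases le_or_gt 0 l with h | h
  · lift l to ℕ using h
    rw [zpow_natCast]
    simpa using FreeGroup.norm_of_pow (1 : Fin 2) l
  · have : (FreeGroup.of (1 : Fin 2)) ^ l = ((FreeGroup.of (1 : Fin 2)) ^ (-l).toNat)⁻¹ := by
      rw [← zpow_natCast, ← zpow_neg]
      congr 1
      omega
    rw [this]
    have h2 := FreeGroup.norm_inv_eq (x := (FreeGroup.of (1 : Fin 2)) ^ (-l).toNat)
    have h3 := FreeGroup.norm_of_pow (1 : Fin 2) (-l).toNat
    simp only [FreeGroup.norm] at h2 h3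
    rw [h2, h3]
    omega

lemma key_lemma {F K : Type*} [Field F] [Field K] [Algebra F K]
    (σ : FreeGroup (Fin 2) →* (K ≃ₐ[F] K)) (c : K)
    (hrel : ∀ l : ℤ, σ (FreeGroup.of 0) (σ (FreeGroup.of 1 ^ l) c) = σ (FreeGroup.of 1 ^ l) c)
    (g : FreeGroup (Fin 2)) :
    ∀ l : ℤ, σ g (σ (FreeGroup.of 1 ^ l) c)
      = σ (FreeGroup.of 1 ^ ((expSum g).toAdd + l)) c := by
  induction g using FreeGroup.induction_on with
  | C1 => intro l; simp [map_one]
  | of x =>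
    intro l
    show σ (FreeGroup.of x) (σ (FreeGroup.of 1 ^ l) c)
      = σ (FreeGroup.of 1 ^ ((expSum (FreeGroup.of x)).toAdd + l)) c
    rcases show x = 0 ∨ x = 1 by omega with rfl | rfl
    · have he : (expSum (FreeGroup.of (0 : Fin 2))).toAdd = 0 := by
        simp [expSum, FreeGroup.lift_apply_of]
      rw [show (FreeGroup.of (0 : Fin 2)) = FreeGroup.of 0 from rfl]
      rw [hrel l, he, zero_add]
    · have he : (expSum (FreeGroup.of (1 : Fin 2))).toAdd = 1 := by
        simp [expSum, FreeGroup.lift_apply_of]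
      have : FreeGroup.of (1 : Fin 2) * FreeGroup.of 1 ^ l = FreeGroup.of 1 ^ (1 + l) := by
        rw [zpow_add, zpow_one]
      rw [he, ← this, map_mul]
      rfl
  | inv_of x ih =>
    intro l
    show σ (FreeGroup.of x)⁻¹ (σ (FreeGroup.of 1 ^ l) c)
      = σ (FreeGroup.of 1 ^ ((expSum (FreeGroup.of x)⁻¹).toAdd + l)) c
    have ih' : ∀ l : ℤ, σ (FreeGroup.of x) (σ (FreeGroup.of 1 ^ l) c)
        = σ (FreeGroup.of 1 ^ ((expSum (FreeGroup.of x)).toAdd + l)) c := ih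
    have h1 := ih' (-(expSum (FreeGroup.of x)).toAdd + l)
    have h1' : σ (FreeGroup.of x) (σ (FreeGroup.of 1 ^ (-(expSum (FreeGroup.of x)).toAdd + l)) c)
        = σ (FreeGroup.of 1 ^ l) c := by
      rw [h1]
      congr 2
      rw [add_neg_cancel_left]
    have h2 : σ (FreeGroup.of x)⁻¹ (σ (FreeGroup.of 1 ^ l) c)
        = σ (FreeGroup.of 1 ^ (-(expSum (FreeGroup.of x)).toAdd + l)) c := by
      rw [← h1', map_inv]
      exact (σ (FreeGroup.of x)).symm_apply_apply _
    rw [h2]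
    congr 2
    rw [map_inv]
    rfl
  | mul x y ihx ihy =>
    intro l
    rw [map_mul]
    have : (σ x * σ y) (σ (FreeGroup.of 1 ^ l) c) = σ x (σ y (σ (FreeGroup.of 1 ^ l) c)) := rfl
    rw [this, ihy l, ihx, map_mul]
    have : (expSum x * expSum y).toAdd = (expSum x).toAdd + (expSum y).toAdd := rfl
    rw [this, add_assoc]

/-- if the only algebraic relations among the words `θ(c)` (for reduced
words `θ` in `σ₁^{±1}, σ₂^{±1}`) are those induced by `σ₁(σ₂^l(c)) = σ₂^l(c)`, then the
transcendence degree of the set `Θ_r(c)` of values of words of length at most `r` equals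
`2r + 1`: it contains an algebraically independent subset of size `2r + 1` over which
every element of `Θ_r(c)` is algebraic. -/
theorem stmt14 {F K : Type*} [Field F] [Field K] [Algebra F K]
    (σ : FreeGroup (Fin 2) →* (K ≃ₐ[F] K)) (c : K)
    (hrel : ∀ l : ℤ, σ (FreeGroup.of 0) (σ (FreeGroup.of 1 ^ l) c) = σ (FreeGroup.of 1 ^ l) c)
    (hind : AlgebraicIndependent F (fun l : ℤ => σ (FreeGroup.of 1 ^ l) c)) :
    ∀ r : ℕ, ∃ s : Finset K,
      (↑s : Set K) ⊆ {x | ∃ g : FreeGroup (Fin 2), (FreeGroup.toWord g).length ≤ r ∧ x = σ g c} ∧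
      s.card = 2 * r + 1 ∧
      AlgebraicIndependent F (fun x : s => (x : K)) ∧
      ∀ x ∈ {x | ∃ g : FreeGroup (Fin 2), (FreeGroup.toWord g).length ≤ r ∧ x = σ g c},
        IsAlgebraic (Algebra.adjoin F (↑s : Set K)) x := by
  intro r
  classical
  set f : ℤ → K := fun l => σ (FreeGroup.of 1 ^ l) c with hf
  set s : Finset K := (Finset.Icc (-(r : ℤ)) r).image f with hs
  have hmem : ∀ l : ℤ, -(r : ℤ) ≤ l → l ≤ r → f l ∈ s := by
    intro l h1 h2
    exact Finset.mem_image_of_mem f (Finset.mem_Icc.mpr ⟨h1, h2⟩)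
  refine ⟨s, ?_, ?_, ?_, ?_⟩
  · rintro x hx
    simp only [hs, Finset.coe_image, Set.mem_image, Finset.mem_coe, Finset.mem_Icc] at hx
    obtain ⟨l, ⟨h1, h2⟩, rfl⟩ := hx
    refine ⟨FreeGroup.of 1 ^ l, ?_, rfl⟩
    rw [myNorm_zpow]
    omega
  · rw [hs, Finset.card_image_of_injective _ hind.injective, Int.card_Icc]
    omega
  · have h1 := hind.to_subtype_range
    have h2 : (↑s : Set K) ⊆ Set.range f := by
      rintro x hx
      simp only [hs, Finset.coe_image, Set.mem_image, Finset.mem_coe] at hx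
      obtain ⟨l, _, rfl⟩ := hx
      exact ⟨l, rfl⟩
    exact h1.mono h2
  · rintro x ⟨g, hg, rfl⟩
    have hkey := key_lemma σ c hrel g 0
    simp only [zpow_zero, map_one, add_zero] at hkey
    have hx : σ g c ∈ s := by
      rw [show σ g c = f (expSum g).toAdd from hkey]
      have h1 := expSum_abs_le g
      rw [Int.abs_eq_natAbs] at h1
      exact hmem _ (by omega) (by omega)
    have hx' : σ g c ∈ Algebra.adjoin F (↑s : Set K) := Algebra.subset_adjoin hx
    exact isAlgebraic_algebraMap (⟨σ g c, hx'⟩ : Algebra.adjoin F (↑s : Set K))
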